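/- Let k ≥ 4 be an integer, let c ∈ ℂ, let r > 0, and let λ be a real number with 1/2 ≤ λ ≤ 1. Let v_j = c + r·exp(2πij/k) for j = 0, …, k−1, and let σ be the convex hull of {v_0, …, v_{k−1}} in ℂ. For a point p ∈ ℂ define the shrunk copy σ_p = {p + λ·(x − p) : x ∈ σ}. Then σ = σ_c ∪ ⋃_{j=0}^{k−1} σ_{v_j}. -/

import Mathlib

open Real Complex Finset

noncomputable def ssE (t : ℝ) : ℂ := Complex.exp (↑t * Complex.I)

lemma ssE_add (s t : ℝ) : ssE (s + t) = ssE s * ssE t := by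
  simp only [ssE, ← Complex.exp_add, Complex.ofReal_add]; ring_nf

lemma ssE_eq (t : ℝ) : ssE t = ↑(Real.cos t) + ↑(Real.sin t) * Complex.I := by
  rw [ssE, Complex.exp_mul_I, Complex.ofReal_cos, Complex.ofReal_sin]

lemma ssE_re (t : ℝ) : (ssE t).re = Real.cos t := by
  rw [ssE_eq, Complex.add_re, Complex.ofReal_re, Complex.mul_re, Complex.ofReal_re,
    Complex.ofReal_im, Complex.I_re, Complex.I_im]; ring
lemma ssE_im (t : ℝ) : (ssE t).im = Real.sin t := by
  rw [ssE_eq, Complex.add_im, Complex.ofReal_im, Complex.mul_im, Complex.ofReal_re,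
    Complex.ofReal_im, Complex.I_re, Complex.I_im]; ring

lemma ssE_int_two_pi (n : ℤ) : ssE (2 * π * n) = 1 := by
  have h := Complex.exp_int_mul_two_pi_mul_I n
  rw [ssE, ← h]; push_cast; ring_nf

lemma mem_hull {k : ℕ} (v : Fin k → ℂ) (w : Fin k → ℝ)
    (h0 : ∀ j, 0 ≤ w j) (h1 : ∑ j, w j = 1) :
    (∑ j, w j • v j) ∈ convexHull ℝ (Set.range v) := by
  have h := Finset.centerMass_mem_convexHull (Finset.univ (α := Fin k)) (w := w)
    (fun i _ => h0 i) (by rw [h1]; norm_num) (z := v) (fun i _ => Set.mem_range_self i)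
  rwa [Finset.centerMass, h1, inv_one, one_smul] at h

lemma ssE_zero : ssE 0 = 1 := by simp [ssE]

lemma cos_odd_le (k : ℕ) (hk : 4 ≤ k) (d : ℤ) (hd : Odd d) :
    Real.cos (d * (π / k)) ≤ Real.cos (π / k) := by
  have hk0 : (0:ℝ) < k := by positivity
  have h2k : (0:ℤ) < 2 * k := by positivity
  set e := d % (2 * k) with he_def
  set q := d / (2 * (k:ℤ)) with hq_def
  have he0 : 0 ≤ e := Int.emod_nonneg d (by omega)
  have helt : e < 2 * k := Int.emod_lt_of_pos d h2k
  have heodd : e % 2 = 1 := by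
    have h1 : e % 2 = d % 2 := Int.emod_emod_of_dvd d ⟨(k:ℤ), by ring⟩
    rw [h1, Int.odd_iff.mp hd]
  have he1 : 1 ≤ e := by omega
  have hde : 2 * (k:ℤ) * q + e = d := Int.mul_ediv_add_emod d (2*k)
  have hdeR : (d:ℝ) = 2 * (k:ℝ) * (q:ℝ) + (e:ℝ) := by exact_mod_cast hde.symm
  have hrw : (d:ℝ) * (π / k) = (e:ℝ) * (π / k) + (q:ℝ) * (2 * π) := by
    rw [hdeR]; field_simp; ring
  rw [hrw, Real.cos_add_int_mul_two_pi]
  have hπk0 : 0 ≤ π / k := by positivity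
  rcases le_or_gt e k with hek | hek
  · apply Real.cos_le_cos_of_nonneg_of_le_pi hπk0
    · calc (e:ℝ) * (π / k) ≤ k * (π / k) := by
            apply mul_le_mul_of_nonneg_right _ hπk0; exact_mod_cast hek
        _ = π := by field_simp
    · have h1 : (1:ℝ) ≤ (e:ℝ) := by exact_mod_cast he1
      nlinarith [Real.pi_pos]
  · have heR : ((e:ℝ)) ≤ 2*k - 1 := by
      have : (e:ℤ) ≤ 2*k - 1 := by omega
      exact_mod_cast this
    have hekR : (k:ℝ) < e := by exact_mod_cast hek
    have h1 : (e:ℝ) * (π / k) = 2 * π - (2*(k:ℝ) - e) * (π / k) := by field_simp; ring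
    rw [h1, Real.cos_two_pi_sub]
    apply Real.cos_le_cos_of_nonneg_of_le_pi hπk0
    · calc (2*(k:ℝ) - e) * (π/k) ≤ k * (π/k) := by
            apply mul_le_mul_of_nonneg_right _ hπk0; linarith
        _ = π := by field_simp
    · nlinarith [Real.pi_pos]

lemma ssE_mod (k : ℕ) (hk : 0 < k) (m : ℤ) :
    ∃ j : Fin k, ssE (2*π/k * m) = ssE (2*π/k * (j:ℕ)) := by
  have hk0 : (0:ℝ) < k := by positivity
  have hmod0 : 0 ≤ m % k := Int.emod_nonneg m (by exact_mod_cast hk.ne')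
  have hmodlt : m % k < k := Int.emod_lt_of_pos m (by exact_mod_cast hk)
  refine ⟨⟨(m % k).toNat, by omega⟩, ?_⟩
  set q := m / (k:ℤ) with hq_def
  have hde : (k:ℤ) * q + m % k = m := Int.mul_ediv_add_emod m k
  have hdeR : (m:ℝ) = (k:ℝ) * q + ((m % k : ℤ):ℝ) := by exact_mod_cast hde.symm
  have h2 : 2*π/k * m = 2*π/k * ((m % k : ℤ):ℝ) + 2 * π * (q:ℝ) := by
    rw [hdeR]; field_simp; ring
  rw [h2, ssE_add, ssE_int_two_pi, mul_one]
  congr 2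
  simp only [Fin.val_mk]
  exact_mod_cast (Int.toNat_of_nonneg hmod0).symm

lemma sum_ssE (k : ℕ) (hk : 2 ≤ k) : ∑ j : Fin k, ssE (2*π/k * j) = 0 := by
  have hk0 : (0:ℝ) < k := by positivity
  set z := ssE (2*π/k) with hz
  have hpow : ∀ n : ℕ, ssE (2*π/k * n) = z ^ n := by
    intro n
    induction n with
    | zero => simp [ssE_zero]
    | succ n ih =>
      have : 2*π/k * (n+1:ℕ) = 2*π/k * n + 2*π/k := by push_cast; ring
      rw [this, ssE_add, ih, pow_succ]
  have hzk : z ^ k = 1 := by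
    rw [← hpow k]
    have : 2*π/k * k = 2*π*((1:ℤ):ℝ) := by push_cast; field_simp
    rw [this, ssE_int_two_pi]
  have hz1 : z ≠ 1 := by
    intro h
    rw [hz, ssE] at h
    rcases Complex.exp_eq_one_iff.mp h with ⟨n, hn⟩
    have hI : (Complex.I : ℂ) ≠ 0 := Complex.I_ne_zero
    have h2 : ((2*π/k : ℝ) : ℂ) = (n : ℂ) * (2*(π:ℝ)) := by
      apply mul_right_cancel₀ hI; rw [hn]; push_cast; ring
    have hreal : 2*π/k = (n:ℝ) * (2*π) := by exact_mod_cast h2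
    have hπ := Real.pi_pos
    have hkk : (2:ℝ) ≤ k := by exact_mod_cast hk
    have hpos : (0:ℝ) < (n:ℝ) * (2*π) := by rw [← hreal]; positivity
    have hn0 : 0 < n := by
      by_contra hcon
      push_neg at hcon
      have : (n:ℝ) ≤ 0 := by exact_mod_cast hcon
      nlinarith
    have hn1 : (1:ℝ) ≤ (n:ℝ) := by exact_mod_cast hn0
    have : 2*π/k ≤ π := by rw [div_le_iff₀ hk0]; nlinarith
    nlinarith
  calc ∑ j : Fin k, ssE (2*π/k * j)
      = ∑ j : Fin k, z ^ (j:ℕ) := Finset.sum_congr rfl fun j _ => hpow j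
    _ = ∑ j ∈ Finset.range k, z ^ j := Fin.sum_univ_eq_sum_range (fun i => z ^ i) k
    _ = (z ^ k - 1) / (z - 1) := geom_sum_eq hz1 k
    _ = 0 := by rw [hzk]; simp

lemma conv3 {s : Set ℂ} (hs : Convex ℝ s) {a b g : ℝ} {x y z : ℂ}
    (ha : 0 ≤ a) (hb : 0 ≤ b) (hg : 0 ≤ g) (habg : a + b + g = 1)
    (hx : x ∈ s) (hy : y ∈ s) (hz : z ∈ s) : a • x + b • y + g • z ∈ s := by
  have h := hs.sum_mem (t := Finset.univ) (w := ![a, b, g]) (z := ![x, y, z])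
    (by intro i _; fin_cases i <;> assumption)
    (by rw [Fin.sum_univ_three]; simpa using habg)
    (by intro i _; fin_cases i <;> assumption)
  rw [Fin.sum_univ_three] at h
  simpa using h

section Poly
variable {k : ℕ} (hk : 4 ≤ k) {c : ℂ} {r : ℝ} (hr : 0 < r) {v : Fin k → ℂ}
  (hv : ∀ j : Fin k, v j = c + (r:ℂ) * ssE (2*π/k * (j:ℕ)))

include hk hr hv

lemma hull_c : c ∈ convexHull ℝ (Set.range v) := by
  have hk0 : (0:ℝ) < k := by positivity
  have h := mem_hull v (fun _ => 1/(k:ℝ)) (fun _ => by positivity)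
    (by rw [Finset.sum_const, card_univ, Fintype.card_fin, nsmul_eq_mul]; field_simp)
  have he : (∑ j : Fin k, (1/(k:ℝ)) • v j) = c := by
    have : ∀ j : Fin k, (1/(k:ℝ)) • v j
        = (1/(k:ℝ) : ℂ) * c + ((1/(k:ℝ):ℝ):ℂ) * r * ssE (2*π/k * (j:ℕ)) := by
      intro j; rw [hv j, Complex.real_smul]; push_cast; ring
    rw [Finset.sum_congr rfl fun j _ => this j, Finset.sum_add_distrib,
      ← Finset.mul_sum, ← Finset.mul_sum, sum_ssE k (by omega), Finset.sum_const,
      card_univ, Fintype.card_fin, mul_zero, add_zero, nsmul_eq_mul]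
    have : ((k:ℂ)) ≠ 0 := by exact_mod_cast hk0.ne'
    push_cast
    field_simp
  rwa [he] at h

lemma vert_mem (m : ℤ) : c + (r:ℂ) * ssE (2*π/k * m) ∈ convexHull ℝ (Set.range v) := by
  obtain ⟨j, hj⟩ := ssE_mod k (by omega) m
  rw [hj, ← hv j]
  exact subset_convexHull ℝ _ (Set.mem_range_self j)

lemma halfplane (m : ℤ) {x : ℂ} (hx : x ∈ convexHull ℝ (Set.range v)) :
    ((x - c) * ssE (-(2*π/k*(m:ℝ) + π/k))).re ≤ r * Real.cos (π/k) := by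
  set U := ssE (-(2*π/k*(m:ℝ) + π/k)) with hU
  have hconv : Convex ℝ {y : ℂ | ((y - c) * U).re ≤ r * Real.cos (π/k)} := by
    intro y1 hy1 y2 hy2 a b ha hb hab
    simp only [Set.mem_setOf_eq] at hy1 hy2 ⊢
    have hrw : (a • y1 + b • y2 - c) * U = a • ((y1 - c) * U) + b • ((y2 - c) * U) := by
      have hab' : (a:ℂ) + b = 1 := by exact_mod_cast hab
      simp only [Complex.real_smul]
      linear_combination (c * U) * hab'
    rw [hrw, Complex.add_re, Complex.real_smul, Complex.real_smul]
    simp only [Complex.re_ofReal_mul]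
    have h1 := mul_le_mul_of_nonneg_left hy1 ha
    have h2 := mul_le_mul_of_nonneg_left hy2 hb
    have h3 : a*(r * Real.cos (π/k)) + b*(r * Real.cos (π/k)) = r * Real.cos (π/k) := by
      rw [← add_mul, hab, one_mul]
    linarith
  have hsub : Set.range v ⊆ {y : ℂ | ((y - c) * U).re ≤ r * Real.cos (π/k)} := by
    rintro - ⟨n, rfl⟩
    simp only [Set.mem_setOf_eq, hv n, add_sub_cancel_left, hU, mul_assoc, ← ssE_add]
    have harg : 2*π/k * (n:ℕ) + -(2*π/k*(m:ℝ) + π/k)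
        = ((2*((n:ℤ) - m) - 1 : ℤ):ℝ) * (π/k) := by
      have hk0 : (0:ℝ) < k := by positivity
      push_cast
      field_simp
      ring
    rw [harg, Complex.re_ofReal_mul, ssE_re]
    have := cos_odd_le k hk (2*((n:ℤ) - m) - 1) ⟨(n:ℤ) - m - 1, by ring⟩
    nlinarith
  exact convexHull_min hsub hconv hx

end Poly

section Poly2
variable {k : ℕ} (hk : 4 ≤ k) {c : ℂ} {r : ℝ} (hr : 0 < r) {v : Fin k → ℂ}
  (hv : ∀ j : Fin k, v j = c + (r:ℂ) * ssE (2*π/k * (j:ℕ)))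
include hk hr hv

lemma sin_le_cos_k : Real.sin (π/k) ≤ Real.cos (π/k) := by
  have hk0 : (0:ℝ) < k := by positivity
  have hπ := Real.pi_pos
  have h4 : (4:ℝ) ≤ k := by exact_mod_cast hk
  have hle : π/k ≤ π/4 := by
    rw [div_le_div_iff₀ hk0 (by norm_num)]; nlinarith
  have h0 : 0 ≤ π/k := by positivity
  have hcos : 0 ≤ Real.cos (π/k + π/4) := by
    apply Real.cos_nonneg_of_mem_Icc
    constructor <;> nlinarith
  rw [Real.cos_add, Real.cos_pi_div_four, Real.sin_pi_div_four] at hcos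
  nlinarith [Real.sqrt_pos.mpr (by norm_num : (0:ℝ) < 2)]

lemma inball (ψ : ℝ) :
    c + ((r * Real.sin (π/k) : ℝ) : ℂ) * ssE ψ ∈ convexHull ℝ (Set.range v) := by
  have hk0 : (0:ℝ) < k := by positivity
  have hπ := Real.pi_pos
  have h4 : (4:ℝ) ≤ k := by exact_mod_cast hk
  set φ := 2*π/k with hφ_def
  have hφ0 : 0 < φ := by positivity
  have hφπ : φ < π := by rw [hφ_def, div_lt_iff₀ hk0]; nlinarith
  have hφ2 : φ/2 = π/k := by rw [hφ_def]; ring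
  have hsinφ : 0 < Real.sin φ := Real.sin_pos_of_pos_of_lt_pi hφ0 hφπ
  have hsinπk : 0 < Real.sin (π/k) := by
    apply Real.sin_pos_of_pos_of_lt_pi (by positivity)
    rw [div_lt_iff₀ hk0]; nlinarith
  have hcosπk : 0 < Real.cos (π/k) := by
    apply Real.cos_pos_of_mem_Ioo
    constructor
    · nlinarith [div_pos hπ hk0]
    · rw [div_lt_div_iff₀ hk0 (by norm_num : (0:ℝ) < 2)]; nlinarith
  set p := ⌊ψ/φ⌋ with hp_def
  set χ := ψ - φ*p with hχ_def
  have hχ0 : 0 ≤ χ := by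
    have := Int.floor_le (ψ/φ)
    rw [hχ_def]
    have : φ * p ≤ ψ := by
      calc φ * p = (p:ℝ) * φ := by ring
        _ ≤ (ψ/φ) * φ := by apply mul_le_mul_of_nonneg_right this hφ0.le
        _ = ψ := by field_simp
    linarith
  have hχφ : χ ≤ φ := by
    have h1 := Int.lt_floor_add_one (ψ/φ)
    rw [hχ_def]
    have : ψ < φ * (p + 1) := by
      calc ψ = (ψ/φ) * φ := by field_simp
        _ < ((p:ℝ) + 1) * φ := by apply mul_lt_mul_of_pos_right h1 hφ0
        _ = φ * (p+1) := by ring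
    linarith
  have hsχ : 0 ≤ Real.sin χ := Real.sin_nonneg_of_nonneg_of_le_pi hχ0 (by linarith)
  have hsφχ : 0 ≤ Real.sin (φ - χ) :=
    Real.sin_nonneg_of_nonneg_of_le_pi (by linarith) (by linarith)
  set A := Real.sin (π/k) * Real.sin (φ - χ) / Real.sin φ with hA_def
  set B := Real.sin (π/k) * Real.sin χ / Real.sin φ with hB_def
  have hA0 : 0 ≤ A := by positivity
  have hB0 : 0 ≤ B := by positivity
  have hsin2 : Real.sin φ = 2 * Real.sin (π/k) * Real.cos (π/k) := by
    have : φ = 2 * (π/k) := by rw [hφ_def]; ring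
    rw [this, Real.sin_two_mul]
  have hsum : Real.sin (φ - χ) + Real.sin χ ≤ 2 * Real.sin (π/k) := by
    have h := Real.sin_sub_sin (φ - χ) (-χ)
    rw [Real.sin_neg, sub_neg_eq_add] at h
    have harg : (φ - χ - -χ)/2 = π/k := by rw [← hφ2]; ring
    rw [harg] at h
    have hcble := Real.cos_le_one ((φ - χ + -χ)/2)
    nlinarith
  have hAB1 : A + B ≤ 1 := by
    rw [hA_def, hB_def, ← add_div, div_le_one hsinφ]
    have htan := sin_le_cos_k hk hr hv
    nlinarith
  have key : (A:ℂ) + (B:ℂ) * ssE φ = ((Real.sin (π/k)):ℂ) * ssE χ := by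
    apply Complex.ext
    · simp only [Complex.add_re, Complex.ofReal_re, Complex.mul_re, Complex.ofReal_im,
        ssE_re, ssE_im, zero_mul, sub_zero]
      rw [hA_def, hB_def]
      field_simp
      linear_combination Real.sin_sub φ χ
    · simp only [Complex.add_im, Complex.ofReal_im, Complex.mul_im, Complex.ofReal_re,
        ssE_re, ssE_im, zero_mul, add_zero, zero_add]
      rw [hB_def]
      field_simp
  obtain ⟨j1, hj1⟩ := ssE_mod k (by omega) p
  obtain ⟨j2, hj2⟩ := ssE_mod k (by omega) (p+1)
  have hv1 : v j1 = c + (r:ℂ) * ssE (φ * p) := by rw [hv j1, ← hj1, hφ_def]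
  have hv2 : v j2 = c + (r:ℂ) * ssE (φ * (p+1)) := by
    rw [hv j2, ← hj2, hφ_def]
    norm_num
  have hmem := conv3 (convex_convexHull ℝ (Set.range v))
    (a := 1 - A - B) (b := A) (g := B) (by linarith) hA0 hB0 (by ring)
    (hull_c hk hr hv) (subset_convexHull ℝ _ (Set.mem_range_self j1))
    (subset_convexHull ℝ _ (Set.mem_range_self j2))
  have heq : (1 - A - B) • c + A • (v j1) + B • (v j2)
      = c + ((r * Real.sin (π/k) : ℝ) : ℂ) * ssE ψ := by
    rw [hv1, hv2]
    simp only [Complex.real_smul]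
    have hφp1 : ssE (φ * (p+1)) = ssE (φ * p) * ssE φ := by
      rw [← ssE_add]; congr 1; ring
    have hψ : ssE ψ = ssE (φ * p) * ssE χ := by
      rw [← ssE_add]; congr 1; rw [hχ_def]; ring
    rw [hφp1, hψ]
    simp only [Complex.ofReal_sub, Complex.ofReal_one, Complex.ofReal_mul]
    linear_combination ((r:ℂ) * ssE (φ * (p:ℝ))) * key
  rw [← heq]
  exact hmem

end Poly2

section Poly3
variable {k : ℕ} (hk : 4 ≤ k) {c : ℂ} {r : ℝ} (hr : 0 < r) {v : Fin k → ℂ}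
  (hv : ∀ j : Fin k, v j = c + (r:ℂ) * ssE (2*π/k * (j:ℕ)))
include hk hr hv

lemma decomp {x : ℂ} (hx : x ∈ convexHull ℝ (Set.range v)) :
    ∃ (m : ℤ) (A B : ℝ), 0 ≤ A ∧ 0 ≤ B ∧ A + B ≤ 1 ∧
      x = c + ((A * r : ℝ):ℂ) * ssE (2*π/k * (m:ℝ))
            + ((B * r : ℝ):ℂ) * ssE (2*π/k * ((m:ℝ)+1)) := by
  have hk0 : (0:ℝ) < k := by positivity
  have hπ := Real.pi_pos
  have h4 : (4:ℝ) ≤ k := by exact_mod_cast hk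
  by_cases hxc : x = c
  · exact ⟨0, 0, 0, le_refl 0, le_refl 0, by norm_num, by
      simp [hxc]⟩
  set φ := 2*π/k with hφ_def
  have hφ0 : 0 < φ := by positivity
  have hφπ : φ < π := by rw [hφ_def, div_lt_iff₀ hk0]; nlinarith
  have hφ2 : φ/2 = π/k := by rw [hφ_def]; ring
  have hsinφ : 0 < Real.sin φ := Real.sin_pos_of_pos_of_lt_pi hφ0 hφπ
  have hsinπk : 0 < Real.sin (π/k) := by
    apply Real.sin_pos_of_pos_of_lt_pi (by positivity)
    rw [div_lt_iff₀ hk0]; nlinarith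
  have hcosπk : 0 < Real.cos (π/k) := by
    apply Real.cos_pos_of_mem_Ioo
    constructor
    · nlinarith [div_pos hπ hk0]
    · rw [div_lt_div_iff₀ hk0 (by norm_num : (0:ℝ) < 2)]; nlinarith
  set w := x - c with hw_def
  have hw : w ≠ 0 := sub_ne_zero.mpr hxc
  set ρ := ‖w‖ with hρ_def
  have hρ0 : 0 < ρ := by rw [hρ_def]; exact norm_pos_iff.mpr hw
  set θ := Complex.arg w with hθ_def
  have hwe : (ρ:ℂ) * ssE θ = w := Complex.norm_mul_exp_arg_mul_I w
  clear_value ρ θ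
  set m := ⌊θ/φ⌋ with hm_def
  set δ := θ - (φ*m + φ/2) with hδ_def
  have hδlb : -(φ/2) ≤ δ := by
    have h1 := Int.floor_le (θ/φ)
    have : φ * m ≤ θ := by
      calc φ * m = (m:ℝ) * φ := by ring
        _ ≤ (θ/φ) * φ := mul_le_mul_of_nonneg_right h1 hφ0.le
        _ = θ := by field_simp
    rw [hδ_def]; linarith
  have hδub : δ ≤ φ/2 := by
    have h1 := Int.lt_floor_add_one (θ/φ)
    have : θ < φ * (m + 1) := by
      calc θ = (θ/φ) * φ := by field_simp
        _ < ((m:ℝ) + 1) * φ := mul_lt_mul_of_pos_right h1 hφ0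
        _ = φ * (m+1) := by ring
    rw [hδ_def]; linarith
  clear_value m
  clear_value δ
  have hs1 : 0 ≤ Real.sin (φ/2 - δ) :=
    Real.sin_nonneg_of_nonneg_of_le_pi (by linarith) (by linarith)
  have hs2 : 0 ≤ Real.sin (φ/2 + δ) :=
    Real.sin_nonneg_of_nonneg_of_le_pi (by linarith) (by linarith)
  set A := ρ * Real.sin (φ/2 - δ) / (r * Real.sin φ) with hA_def
  set B := ρ * Real.sin (φ/2 + δ) / (r * Real.sin φ) with hB_def
  have hA0 : 0 ≤ A := by positivity
  have hB0 : 0 ≤ B := by positivity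
  clear_value A B
  -- halfplane bound
  have hhp := halfplane hk hr hv m hx
  have hδθ : δ = θ + -(2*π/(k:ℝ)*(m:ℝ) + π/(k:ℝ)) := by
    rw [hδ_def, ← hφ2]; ring
  have hre : ((x - c) * ssE (-(2*π/(k:ℝ)*(m:ℝ) + π/(k:ℝ)))).re = ρ * Real.cos δ := by
    rw [← hw_def, ← hwe, mul_assoc, ← ssE_add, ← hδθ, Complex.re_ofReal_mul, ssE_re]
  rw [hre] at hhp
  have hsum : Real.sin (φ/2 - δ) + Real.sin (φ/2 + δ) = 2 * Real.sin (φ/2) * Real.cos δ := by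
    have h := Real.sin_sub_sin (φ/2 + δ) (δ - φ/2)
    have h1 : Real.sin (δ - φ/2) = -Real.sin (φ/2 - δ) := by
      rw [← Real.sin_neg]; congr 1; ring
    rw [h1] at h
    have h2 : (φ/2 + δ - (δ - φ/2))/2 = φ/2 := by ring
    have h3 : (φ/2 + δ + (δ - φ/2))/2 = δ := by ring
    rw [h2, h3] at h
    linarith
  have hsin2 : Real.sin φ = 2 * Real.sin (π/k) * Real.cos (π/k) := by
    have h : φ = 2 * (π/k) := by rw [hφ_def]; ring
    rw [h, Real.sin_two_mul]
  have hAB1 : A + B ≤ 1 := by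
    rw [hA_def, hB_def, ← add_div, div_le_one (by positivity)]
    rw [← mul_add, hsum, hφ2]
    nlinarith
  refine ⟨m, A, B, hA0, hB0, hAB1, ?_⟩
  have htrig : Real.sin (φ/2 - δ)
      = Real.sin φ * Real.cos (φ/2+δ) - Real.cos φ * Real.sin (φ/2+δ) := by
    have h := Real.sin_sub φ (φ/2+δ)
    rw [show φ - (φ/2+δ) = φ/2 - δ by ring] at h
    exact h
  have hrs : r * Real.sin φ ≠ 0 := by positivity
  have hA' : A * (r * Real.sin φ) = ρ * Real.sin (φ/2 - δ) := by
    rw [hA_def, div_mul_cancel₀ _ hrs]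
  have hB' : B * (r * Real.sin φ) = ρ * Real.sin (φ/2 + δ) := by
    rw [hB_def, div_mul_cancel₀ _ hrs]
  have hre_id : A*r + B*r*Real.cos φ = ρ * Real.cos (φ/2 + δ) := by
    apply mul_right_cancel₀ hsinφ.ne'
    linear_combination hA' + Real.cos φ * hB' + ρ * htrig
  have him_id : B*r*Real.sin φ = ρ * Real.sin (φ/2+δ) := by
    linear_combination hB'
  have key : ((A*r:ℝ):ℂ) + ((B*r:ℝ):ℂ) * ssE φ = (ρ:ℂ) * ssE (φ/2 + δ) := by
    apply Complex.ext
    · simp only [Complex.add_re, Complex.ofReal_re, Complex.mul_re, Complex.ofReal_im,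
        ssE_re, ssE_im, zero_mul, sub_zero]
      linear_combination hre_id
    · simp only [Complex.add_im, Complex.ofReal_im, Complex.mul_im, Complex.ofReal_re,
        ssE_re, ssE_im, zero_mul, add_zero, zero_add]
      linear_combination him_id
  have hE1 : ssE (2*π/k * ((m:ℝ)+1)) = ssE (φ * m) * ssE φ := by
    rw [← ssE_add, ← hφ_def]; congr 1; ring
  have hE0 : ssE (2*π/k * (m:ℝ)) = ssE (φ * m) := by rw [← hφ_def]
  rw [hE0, hE1]
  have hθeq : θ = φ * m + (φ/2 + δ) := by rw [hδ_def]; ring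
  have : (ρ:ℂ) * ssE θ = ssE (φ * m) * ((ρ:ℂ) * ssE (φ/2 + δ)) := by
    rw [hθeq, ssE_add]; ring
  have hx_eq : x = c + ssE (φ * m) * ((ρ:ℂ) * ssE (φ/2 + δ)) := by
    rw [← this, hwe, hw_def]; ring
  rw [hx_eq]
  linear_combination (-ssE (φ * (m:ℝ))) * key
end Poly3

lemma ssE_two (a : ℝ) : ssE (2*a) - 1 = ((2 * Real.sin a : ℝ) : ℂ) * ssE (a + π/2) := by
  apply Complex.ext
  · simp only [Complex.sub_re, Complex.one_re, Complex.mul_re, Complex.ofReal_re,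
      Complex.ofReal_im, ssE_re, ssE_im, zero_mul, sub_zero]
    rw [Real.cos_add, Real.cos_pi_div_two, Real.sin_pi_div_two]
    linear_combination Real.cos_two_mul a + 2 * Real.sin_sq_add_cos_sq a
  · simp only [Complex.sub_im, Complex.one_im, Complex.mul_im, Complex.ofReal_re,
      Complex.ofReal_im, ssE_re, ssE_im, zero_mul, add_zero, sub_zero]
    rw [Real.sin_add, Real.cos_pi_div_two, Real.sin_pi_div_two]
    linear_combination Real.sin_two_mul a
  
lemma ssE_neg_pi (ξ : ℝ) : ssE (ξ - π) = -ssE ξ := by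
  apply Complex.ext
  · simp only [ssE_re, Complex.neg_re, Real.cos_sub, Real.cos_pi, Real.sin_pi]; ring
  · simp only [ssE_im, Complex.neg_im, Real.sin_sub, Real.cos_pi, Real.sin_pi]; ring

section Poly4
variable {k : ℕ} (hk : 4 ≤ k) {c : ℂ} {r : ℝ} (hr : 0 < r) {v : Fin k → ℂ}
  (hv : ∀ j : Fin k, v j = c + (r:ℂ) * ssE (2*π/k * (j:ℕ)))
include hk hr hv

lemma midchord1 (m : ℤ) :
    ssE (2*π/k*((m:ℝ)+1)) - ssE (2*π/k*(m:ℝ))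
      = ((2 * Real.sin (π/k) : ℝ) : ℂ) * ssE (2*π/k*(m:ℝ) + π/k + π/2) := by
  have h1 : ssE (2*π/k*((m:ℝ)+1)) = ssE (2*π/k*(m:ℝ)) * ssE (2*(π/k)) := by
    rw [← ssE_add]; congr 1; field_simp
  rw [show 2*π/(k:ℝ)*(m:ℝ) + π/k + π/2 = 2*π/(k:ℝ)*(m:ℝ) + (π/k + π/2) from by ring,
    h1, ssE_add (2*π/k*(m:ℝ)) (π/k + π/2)]
  linear_combination ssE (2*π/k*(m:ℝ)) * ssE_two (π/k)

lemma midchord2 (m : ℤ) :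
    ssE (2*π/k*(m:ℝ)) - ssE (2*π/k*((m:ℝ)+1))
      = ((2 * Real.sin (π/k) : ℝ) : ℂ) * ssE (2*π/k*(m:ℝ) + π/k - π/2) := by
  have h1 : 2*π/k*(m:ℝ) + π/k - π/2 = (2*π/k*(m:ℝ) + π/k + π/2) - π := by ring
  rw [h1, ssE_neg_pi]
  linear_combination -midchord1 hk hr hv m

lemma cover {x : ℂ} (hx : x ∈ convexHull ℝ (Set.range v)) :
    ∃ p : ℂ, (p = c ∨ ∃ j : Fin k, p = v j)
      ∧ 2*x - p ∈ convexHull ℝ (Set.range v) := by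
  obtain ⟨m, A, B, hA0, hB0, hAB1, hxeq⟩ := decomp hk hr hv hx
  have hσ : Convex ℝ (convexHull ℝ (Set.range v)) := convex_convexHull ℝ _
  have hc : c ∈ convexHull ℝ (Set.range v) := hull_c hk hr hv
  obtain ⟨j1, hj1⟩ := ssE_mod k (by omega) m
  obtain ⟨j2, hj2⟩ := ssE_mod k (by omega) (m+1)
  have hv1 : v j1 = c + (r:ℂ) * ssE (2*π/k * (m:ℝ)) := by rw [hv j1, ← hj1]
  have hv2 : v j2 = c + (r:ℂ) * ssE (2*π/k * ((m:ℝ)+1)) := by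
    rw [hv j2, ← hj2]
    norm_num
  have hm1 : v j1 ∈ convexHull ℝ (Set.range v) :=
    subset_convexHull ℝ _ (Set.mem_range_self j1)
  have hm2 : v j2 ∈ convexHull ℝ (Set.range v) :=
    subset_convexHull ℝ _ (Set.mem_range_self j2)
  push_cast at hxeq
  rcases le_or_gt (A + B) (1/2) with hcase1 | hcase1
  · -- center copy
    refine ⟨c, Or.inl rfl, ?_⟩
    have hmem := conv3 hσ (a := 1-2*A-2*B) (b := 2*A) (g := 2*B)
      (by linarith) (by linarith) (by linarith) (by ring) hc hm1 hm2
    have heq : (1-2*A-2*B) • c + (2*A) • (v j1) + (2*B) • (v j2) = 2*x - c := by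
      rw [hv1, hv2]
      simp only [Complex.real_smul]
      push_cast
      linear_combination (-2 : ℂ) * hxeq
    rwa [heq] at hmem
  rcases le_or_gt (1/2) A with hcaseA | hcaseA
  · -- vertex copy at v j1, coefficient A large
    refine ⟨v j1, Or.inr ⟨j1, rfl⟩, ?_⟩
    have hmem := conv3 hσ (a := 2-2*A-2*B) (b := 2*A-1) (g := 2*B)
      (by linarith) (by linarith) (by linarith) (by ring) hc hm1 hm2
    have heq : (2-2*A-2*B) • c + (2*A-1) • (v j1) + (2*B) • (v j2) = 2*x - v j1 := by
      rw [hv1, hv2]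
      simp only [Complex.real_smul]
      push_cast
      linear_combination (-2 : ℂ) * hxeq
    rwa [heq] at hmem
  rcases le_or_gt (1/2) B with hcaseB | hcaseB
  · -- vertex copy at v j2, coefficient B large
    refine ⟨v j2, Or.inr ⟨j2, rfl⟩, ?_⟩
    have hmem := conv3 hσ (a := 2-2*A-2*B) (b := 2*A) (g := 2*B-1)
      (by linarith) (by linarith) (by linarith) (by ring) hc hm1 hm2
    have heq : (2-2*A-2*B) • c + (2*A) • (v j1) + (2*B-1) • (v j2) = 2*x - v j2 := by
      rw [hv1, hv2]
      simp only [Complex.real_smul]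
      push_cast
      linear_combination (-2 : ℂ) * hxeq
    rwa [heq] at hmem
  -- now A < 1/2, B < 1/2, A + B > 1/2
  rcases le_total B A with hBA | hBA
  · -- vertex copy at v j1 using midchord
    refine ⟨v j1, Or.inr ⟨j1, rfl⟩, ?_⟩
    have hQ := inball hk hr hv (2*π/k*(m:ℝ) + π/k + π/2)
    have hmid := midchord1 hk hr hv m
    have hmem := conv3 hσ (a := 2*A-2*B) (b := 2-4*A) (g := 2*A+2*B-1)
      (by linarith) (by linarith) (by linarith) (by ring) hc hQ hm2
    have heq : (2*A-2*B) • c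
        + (2-4*A) • (c + ((r * Real.sin (π/k) : ℝ):ℂ) * ssE (2*π/k*(m:ℝ) + π/k + π/2))
        + (2*A+2*B-1) • (v j2) = 2*x - v j1 := by
      rw [hv1, hv2]
      simp only [Complex.real_smul]
      push_cast
      push_cast at hmid
      linear_combination (-2 : ℂ) * hxeq + (2*(A:ℂ)-1) * (r:ℂ) * hmid
    rwa [heq] at hmem
  · -- vertex copy at v j2 using midchord
    refine ⟨v j2, Or.inr ⟨j2, rfl⟩, ?_⟩
    have hQ := inball hk hr hv (2*π/k*(m:ℝ) + π/k - π/2)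
    have hmid := midchord2 hk hr hv m
    have hmem := conv3 hσ (a := 2*B-2*A) (b := 2-4*B) (g := 2*A+2*B-1)
      (by linarith) (by linarith) (by linarith) (by ring) hc hQ hm1
    have heq : (2*B-2*A) • c
        + (2-4*B) • (c + ((r * Real.sin (π/k) : ℝ):ℂ) * ssE (2*π/k*(m:ℝ) + π/k - π/2))
        + (2*A+2*B-1) • (v j1) = 2*x - v j2 := by
      rw [hv1, hv2]
      simp only [Complex.real_smul]
      push_cast
      push_cast at hmid
      linear_combination (-2 : ℂ) * hxeq + (2*(B:ℂ)-1) * (r:ℂ) * hmid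
    rwa [heq] at hmem

end Poly4

/-- Lemma 10 (lem:shrunk): a regular k-gon (k ≥ 4) `σ` in ℂ, with center `c`,
circumradius `r` and vertices `v j = c + r·exp(2πij/k)`, equals the union of its
shrunk set: the homothetic copies of `σ` of ratio `λ ∈ [1/2, 1]` centered at `c`
and at each vertex `v j`. -/
theorem stmt_16 (k : ℕ) (hk : 4 ≤ k) (c : ℂ) (r : ℝ) (hr : 0 < r)
    (lam : ℝ) (hlam1 : 1 / 2 ≤ lam) (hlam2 : lam ≤ 1) :
    let v : Fin k → ℂ := fun j =>
      c + (r : ℂ) * Complex.exp (2 * Real.pi * Complex.I * (j : ℕ) / k)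
    let σ : Set ℂ := convexHull ℝ (Set.range v)
    let shrink : ℂ → Set ℂ := fun p => (fun x => p + lam • (x - p)) '' σ
    σ = shrink c ∪ ⋃ j, shrink (v j) := by
  intro v σ shrink
  have hv : ∀ j : Fin k, v j = c + (r:ℂ) * ssE (2*π/k * (j:ℕ)) := by
    intro j
    show c + (r:ℂ) * Complex.exp (2 * Real.pi * Complex.I * (j:ℕ) / k) = _
    congr 2
    rw [ssE]
    congr 1
    push_cast
    ring
  have hσc : Convex ℝ σ := convex_convexHull ℝ _
  have hcσ : c ∈ σ := hull_c hk hr hv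
  have hvσ : ∀ j, v j ∈ σ := fun j => subset_convexHull ℝ _ (Set.mem_range_self j)
  have hlam0 : (0:ℝ) < lam := by linarith
  have hsub : ∀ p : ℂ, p ∈ σ → shrink p ⊆ σ := by
    rintro p hp - ⟨y, hy, rfl⟩
    have h := hσc hp hy (by linarith : (0:ℝ) ≤ 1 - lam) hlam0.le (by ring)
    have heq : p + lam • (y - p) = (1 - lam) • p + lam • y := by
      simp only [Complex.real_smul]; push_cast; ring
    show p + lam • (y - p) ∈ σ
    rwa [heq]
  ext x
  constructor
  · intro hx
    obtain ⟨p, hp, h2⟩ := cover hk hr hv hx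
    have hpσ : p ∈ σ := by
      rcases hp with rfl | ⟨j, rfl⟩
      · exact hcσ
      · exact hvσ j
    set u : ℝ := 1/(2*lam) with hu
    have hu1 : u ≤ 1 := by rw [hu, div_le_one (by linarith)]; linarith
    have hu0 : 0 ≤ u := by positivity
    have hyσ : (1-u) • p + u • (2*x - p) ∈ σ := hσc hpσ h2 (by linarith) hu0 (by ring)
    have hul : lam * (2*u) = 1 := by rw [hu]; field_simp
    have hulC : (lam:ℂ) * (2*(u:ℂ)) = 1 := by exact_mod_cast hul
    have himg : p + lam • (((1-u) • p + u • (2*x - p)) - p) = x := by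
      simp only [Complex.real_smul]
      push_cast
      linear_combination (x - p) * hulC
    rcases hp with rfl | ⟨j, rfl⟩
    · left; exact ⟨_, hyσ, himg⟩
    · right; exact Set.mem_iUnion.mpr ⟨j, ⟨_, hyσ, himg⟩⟩
  · intro hx
    rcases hx with hx | hx
    · exact hsub c hcσ hx
    · obtain ⟨j, hj⟩ := Set.mem_iUnion.mp hx
      exact hsub (v j) (hvσ j) hj
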